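/- In any classical Kripke model, double negation elimination holds semantically: w forces A if and only if w forces ¬¬A, and w refutes A if and only if w refutes ¬¬A. -/
import Mathlib


/-- Formulas of predicate logic (higher-order abstract syntax over a
type `C` of constants/domain elements). -/
inductive Formula (C : Type) : Type where
  | atom : ℕ → List C → Formula C
  | top : Formula C
  | bot : Formula C
  | and : Formula C → Formula C → Formula C
  | or : Formula C → Formula C → Formula C
  | imp : Formula C → Formula C → Formula C
  | all : (C → Formula C) → Formula C
  | ex : (C → Formula C) → Formula C

/-- The data of a classical Kripke model: possible worlds, ordering,
domain function, strong refutation on atomic sentences, exploding predicate. -/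
structure CKPre (C : Type) where
  K : Type
  le : K → K → Prop
  D : K → Set C
  srefAtom : K → ℕ → List C → Prop
  expl : K → Prop

namespace CKPre

variable {C : Type}

/-- Orthogonality: every greater world satisfying `S` is exploding. -/
def orth (M : CKPre C) (S : M.K → Prop) (w : M.K) : Prop :=
  ∀ w', M.le w w' → S w' → M.expl w'

/-- Strong refutation, extended from atomic to composite sentences;
(non-strong) forcing and refutation are expressed via `orth`. -/
def sref (M : CKPre C) : Formula C → M.K → Prop
  | .atom p args, w => M.srefAtom w p args
  | .bot, _ => True
  | .top, _ => False
  | .and A B, w => M.orth (M.orth (M.sref A)) w ∨ M.orth (M.orth (M.sref B)) w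
  | .or A B, w => M.orth (M.orth (M.sref A)) w ∧ M.orth (M.orth (M.sref B)) w
  | .imp A B, w => M.orth (M.sref A) w ∧ M.orth (M.orth (M.sref B)) w
  | .all A, w => ∃ d ∈ M.D w, M.orth (M.orth (M.sref (A d))) w
  | .ex A, w => ∀ w', M.le w w' → ∀ d ∈ M.D w', M.orth (M.orth (M.sref (A d))) w'

/-- `w` forces `A`: every `w' ≥ w` strongly refuting `A` is exploding. -/
def force (M : CKPre C) (A : Formula C) : M.K → Prop := M.orth (M.sref A)

/-- `w` refutes `A`: every `w' ≥ w` forcing `A` is exploding. -/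
def refute (M : CKPre C) (A : Formula C) : M.K → Prop := M.orth (M.force A)

end CKPre

/-- A classical Kripke model: the data together with the required properties
(inhabited poset of worlds, monotone domain, monotone strong refutation
on atoms with arguments in the domain, monotone exploding predicate). -/
structure CKModel (C : Type) where
  pre : CKPre C
  le_refl : ∀ w, pre.le w w
  le_trans : ∀ w₁ w₂ w₃, pre.le w₁ w₂ → pre.le w₂ w₃ → pre.le w₁ w₃
  le_antisymm : ∀ w₁ w₂, pre.le w₁ w₂ → pre.le w₂ w₁ → w₁ = w₂
  nonempty : Nonempty pre.K
  D_mono : ∀ w w', pre.le w w' → pre.D w ⊆ pre.D w'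
  srefAtom_dom : ∀ w p args, pre.srefAtom w p args → ∀ d ∈ args, d ∈ pre.D w
  srefAtom_mono : ∀ w w' p args, pre.le w w' → pre.srefAtom w p args → pre.srefAtom w' p args
  expl_mono : ∀ w w', pre.le w w' → pre.expl w → pre.expl w'

/-- Negation ¬A := A → ⊥. -/
def Formula.neg {C : Type} (A : Formula C) : Formula C := Formula.imp A Formula.bot

lemma orth_mono {C : Type} (M : CKModel C) (S : M.pre.K → Prop) {w w' : M.pre.K}
    (h : M.pre.le w w') (ho : M.pre.orth S w) : M.pre.orth S w' :=
  fun w'' hw'' hS => ho w'' (M.le_trans _ _ _ h hw'') hS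

lemma sref_mono {C : Type} (M : CKModel C) (A : Formula C) {w w' : M.pre.K}
    (h : M.pre.le w w') (hs : M.pre.sref A w) : M.pre.sref A w' := by
  induction A generalizing w w' with
  | atom p args => exact M.srefAtom_mono _ _ _ _ h hs
  | top => exact hs
  | bot => exact hs
  | and A B _ _ =>
      rcases hs with hs | hs
      · exact Or.inl (orth_mono M _ h hs)
      · exact Or.inr (orth_mono M _ h hs)
  | or A B _ _ => exact ⟨orth_mono M _ h hs.1, orth_mono M _ h hs.2⟩
  | imp A B _ _ => exact ⟨orth_mono M _ h hs.1, orth_mono M _ h hs.2⟩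
  | all A _ =>
      obtain ⟨d, hd, ho⟩ := hs
      exact ⟨d, M.D_mono _ _ h hd, orth_mono M _ h ho⟩
  | ex A _ => exact fun w'' hw'' => hs w'' (M.le_trans _ _ _ h hw'')

lemma sref_neg_iff {C : Type} (M : CKModel C) (A : Formula C) (w : M.pre.K) :
    M.pre.sref (Formula.neg A) w ↔ M.pre.force A w := by
  constructor
  · exact fun h => h.1
  · intro h
    exact ⟨h, fun w' hw' h2 => h2 w' (M.le_refl w') trivial⟩

lemma force_neg_iff {C : Type} (M : CKModel C) (A : Formula C) (w : M.pre.K) :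
    M.pre.force (Formula.neg A) w ↔ M.pre.refute A w := by
  constructor
  · exact fun h w' hw' hf => h w' hw' ((sref_neg_iff M A w').mpr hf)
  · exact fun h w' hw' hs => h w' hw' ((sref_neg_iff M A w').mp hs)

lemma sref_refute {C : Type} (M : CKModel C) (A : Formula C) (w : M.pre.K)
    (h : M.pre.sref A w) : M.pre.refute A w :=
  fun w' hw' hf => hf w' (M.le_refl w') (sref_mono M A hw' h)

/-- semantic double negation elimination: `w` forces `A` iff
`w` forces `¬¬A`, and `w` refutes `A` iff `w` refutes `¬¬A`. -/
theorem double_negation_semantic {C : Type} (M : CKModel C) (A : Formula C) (w : M.pre.K) :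
    (M.pre.force A w ↔ M.pre.force (Formula.neg (Formula.neg A)) w) ∧
    (M.pre.refute A w ↔ M.pre.refute (Formula.neg (Formula.neg A)) w) := by
  have key : ∀ v : M.pre.K, M.pre.force A v ↔ M.pre.force (Formula.neg (Formula.neg A)) v := by
    intro v
    rw [force_neg_iff]
    constructor
    · intro hf w' hw' hr
      rw [force_neg_iff] at hr
      exact hr w' (M.le_refl w') (orth_mono M _ hw' hf)
    · intro h w' hw' hs
      exact h w' hw' ((force_neg_iff M A w').mpr (sref_refute M A w' hs))
  refine ⟨key w, ?_⟩
  constructor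
  · exact fun h w' hw' hf => h w' hw' ((key w').mpr hf)
  · exact fun h w' hw' hf => h w' hw' ((key w').mp hf)
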